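/- Let H be a linear triangle-free 3-uniform hypergraph on n vertices (no Berge triangle, any two hyperedges share at most one vertex). Then for every ε > 0 there is n₀ such that for n > n₀, e(H) ≤ ε·n². -/

import Mathlib

/-- A Berge triangle in a hypergraph: three distinct vertices and three distinct
hyperedges covering the three vertex pairs cyclically. -/
def HasBergeTriangle {V : Type*} (H : Finset (Finset V)) : Prop :=
  ∃ (v₁ v₂ v₃ : V) (h₁ h₂ h₃ : Finset V),
    v₁ ≠ v₂ ∧ v₂ ≠ v₃ ∧ v₁ ≠ v₃ ∧ h₁ ≠ h₂ ∧ h₂ ≠ h₃ ∧ h₁ ≠ h₃ ∧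
    h₁ ∈ H ∧ h₂ ∈ H ∧ h₃ ∈ H ∧
    v₁ ∈ h₁ ∧ v₂ ∈ h₁ ∧ v₂ ∈ h₂ ∧ v₃ ∈ h₂ ∧ v₃ ∈ h₃ ∧ v₁ ∈ h₃

open Finset SimpleGraph

/-- Upper-bound half of the Ruzsa–Szemerédi theorem: for every `ε > 0`, every
sufficiently large linear Berge-triangle-free 3-uniform hypergraph on `n` vertices
has at most `ε n²` hyperedges. -/
theorem ruzsa_szemeredi_upper (ε : ℝ) (hε : 0 < ε) :
    ∃ n₀ : ℕ, ∀ n : ℕ, n₀ < n → ∀ H : Finset (Finset (Fin n)),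
      (∀ e ∈ H, e.card = 3) →
      (∀ e ∈ H, ∀ f ∈ H, e ≠ f → (e ∩ f).card ≤ 1) →
      ¬ HasBergeTriangle H →
      (H.card : ℝ) ≤ ε * (n : ℝ) ^ 2 := by
  classical
  set δ : ℝ := min ε 1 with hδdef
  have hδ : 0 < δ := lt_min hε one_pos
  have hδ1 : δ ≤ 1 := min_le_right _ _
  have hδε : δ ≤ ε := min_le_left _ _
  have htrb : 0 < triangleRemovalBound δ := triangleRemovalBound_pos hδ
  refine ⟨⌈(triangleRemovalBound δ)⁻¹⌉₊, fun n hn H hcard3 hlin hnotri => ?_⟩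
  have hn1 : 1 ≤ n := Nat.lt_of_le_of_lt (Nat.zero_le _) hn
  -- it suffices to bound by `δ n²`
  have hsuff : (H.card : ℝ) ≤ δ * (n : ℝ) ^ 2 → (H.card : ℝ) ≤ ε * (n : ℝ) ^ 2 := by
    intro h
    refine h.trans ?_
    have : (0:ℝ) ≤ (n:ℝ)^2 := by positivity
    nlinarith
  refine hsuff ?_
  by_contra hbig
  push_neg at hbig
  -- the shadow graph
  let G : SimpleGraph (Fin n) :=
    { Adj := fun x y => x ≠ y ∧ ∃ e ∈ H, x ∈ e ∧ y ∈ e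
      symm := ⟨by rintro x y ⟨hxy, e, he, hx, hy⟩; exact ⟨hxy.symm, e, he, hy, hx⟩⟩
      loopless := ⟨by rintro x ⟨hxx, -⟩; exact hxx rfl⟩ }
  have hcardFin : Fintype.card (Fin n) = n := Fintype.card_fin n
  -- every hyperedge is a triangle of G
  have hHsub : H ⊆ G.cliqueFinset 3 := by
    intro e he
    rw [mem_cliqueFinset_iff]
    refine ⟨?_, hcard3 e he⟩
    intro x hx y hy hxy
    exact ⟨hxy, e, he, hx, hy⟩
  -- every triangle of G is a hyperedge
  have hsubH : G.cliqueFinset 3 ⊆ H := by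
    intro s hs
    rw [mem_cliqueFinset_iff, is3Clique_iff] at hs
    obtain ⟨a, b, c, hab, hac, hbc, rfl⟩ := hs
    obtain ⟨hab', e₁, he₁, ha₁, hb₁⟩ := hab
    obtain ⟨hbc', e₂, he₂, hb₂, hc₂⟩ := hbc
    obtain ⟨hac', e₃, he₃, ha₃, hc₃⟩ := hac
    -- if two of the covering hyperedges coincide, that hyperedge contains all of a,b,c
    have key : ∀ e ∈ H, a ∈ e → b ∈ e → c ∈ e → ({a, b, c} : Finset (Fin n)) ∈ H := by
      intro e he ha hb hc
      have hsub : ({a, b, c} : Finset (Fin n)) ⊆ e := by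
        intro x hx
        simp only [mem_insert, mem_singleton] at hx
        rcases hx with rfl | rfl | rfl <;> assumption
      have h3 : ({a, b, c} : Finset (Fin n)).card = 3 := by
        rw [card_insert_of_notMem, card_insert_of_notMem, card_singleton] <;>
          simp [hab', hac', hbc']
      have := Finset.eq_of_subset_of_card_le hsub (by rw [hcard3 e he, h3])
      rwa [← this] at he
    -- two distinct hyperedges cannot share two vertices
    have two_shared : ∀ e ∈ H, ∀ f ∈ H, ∀ x y : Fin n, x ≠ y →
        x ∈ e → y ∈ e → x ∈ f → y ∈ f → e = f := by
      intro e he f hf x y hxy hxe hye hxf hyf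
      by_contra hef
      have : ({x, y} : Finset (Fin n)) ⊆ e ∩ f := by
        intro z hz
        simp only [mem_insert, mem_singleton] at hz
        rcases hz with rfl | rfl <;> simp_all [Finset.mem_inter]
      have h2 : ({x, y} : Finset (Fin n)).card = 2 := card_pair hxy
      have := (Finset.card_le_card this).trans (hlin e he f hf hef)
      omega
    by_cases h12 : e₁ = e₂
    · subst h12; exact key e₁ he₁ ha₁ hb₁ hc₂
    by_cases h13 : e₁ = e₃
    · subst h13; exact key e₁ he₁ ha₁ hb₁ hc₃
    by_cases h23 : e₂ = e₃
    · subst h23; exact key e₂ he₂ ha₃ hb₂ hc₂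
    · exact absurd ⟨a, b, c, e₁, e₂, e₃, hab', hbc', hac', h12, h23, h13, he₁, he₂, he₃,
        ha₁, hb₁, hb₂, hc₂, hc₃, ha₃⟩ hnotri
  have hHeq : G.cliqueFinset 3 = H := le_antisymm hsubH hHsub
  -- triangles are pairwise edge-disjoint
  have hpd : ((H : Set (Finset (Fin n)))).Pairwise
      fun x y => ((x ∩ y : Finset (Fin n)) : Set (Fin n)).Subsingleton := by
    intro e he f hf hef
    have := hlin e (by exact_mod_cast he) f (by exact_mod_cast hf) hef
    intro x hx y hy
    have := Finset.card_le_one.1 this x (by exact_mod_cast hx) y (by exact_mod_cast hy)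
    exact this
  have hFar : G.FarFromTriangleFree δ := by
    refine farFromTriangleFree_of_disjoint_triangles H hHsub ?_ ?_
    · intro x hx y hy hxy
      have := hpd hx hy hxy
      intro a ha b hb
      exact this (by exact_mod_cast ha) (by exact_mod_cast hb)
    · rw [hcardFin]
      push_cast
      exact hbig.le
  have hlow : triangleRemovalBound δ * (Fintype.card (Fin n)) ^ 3 ≤ #(G.cliqueFinset 3) :=
    hFar.le_card_cliqueFinset
  -- #H ≤ n² : 3 #H ≤ #edges ≤ n choose 2 ≤ n²
  have hedt : G.EdgeDisjointTriangles := by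
    intro x hx y hy hxy
    have hx' : x ∈ H := hsubH (by rwa [mem_cliqueFinset_iff, ← SimpleGraph.mem_cliqueSet_iff])
    have hy' : y ∈ H := hsubH (by rwa [mem_cliqueFinset_iff, ← SimpleGraph.mem_cliqueSet_iff])
    intro a ha b hb
    exact hpd hx' hy' hxy (by simpa using ha) (by simpa using hb)
  have hupper : (#(G.cliqueFinset 3) : ℝ) ≤ (n : ℝ) ^ 2 := by
    have h1 : 3 * #(G.cliqueFinset 3) ≤ #G.edgeFinset := hedt.card_edgeFinset_le
    have h2 : #G.edgeFinset ≤ (Fintype.card (Fin n)).choose 2 := G.card_edgeFinset_le_card_choose_two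
    have h3 : n.choose 2 ≤ n ^ 2 := by
      rw [Nat.choose_two_right]
      calc n * (n - 1) / 2 ≤ n * (n - 1) := Nat.div_le_self _ _
        _ ≤ n * n := Nat.mul_le_mul_left _ (Nat.sub_le _ _)
        _ = n ^ 2 := (sq n).symm
    rw [hcardFin] at h2
    have : #(G.cliqueFinset 3) ≤ n ^ 2 := by omega
    exact_mod_cast this
  rw [hcardFin] at hlow
  -- derive the contradiction: triangleRemovalBound δ * n³ ≤ n² forces n small
  have hnle : (n : ℝ) ≤ (triangleRemovalBound δ)⁻¹ := by
    have hcube : triangleRemovalBound δ * (n : ℝ) ^ 3 ≤ (n : ℝ) ^ 2 := hlow.trans hupper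
    have hn0 : (0:ℝ) < (n:ℝ) := by exact_mod_cast hn1
    have hmul : triangleRemovalBound δ * (n : ℝ) ≤ 1 := by
      have h2 : (0:ℝ) < (n:ℝ)^2 := by positivity
      rw [← mul_le_mul_iff_left₀ h2]
      calc triangleRemovalBound δ * (n:ℝ) * (n:ℝ)^2
          = triangleRemovalBound δ * (n:ℝ)^3 := by ring
        _ ≤ (n:ℝ)^2 := hcube
        _ = 1 * (n:ℝ)^2 := (one_mul _).symm
    rw [← one_div]
    exact (le_div_iff₀ htrb).2 (by rw [mul_comm]; exact hmul)
  have : (n : ℝ) ≤ (⌈(triangleRemovalBound δ)⁻¹⌉₊ : ℝ) :=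
    hnle.trans (Nat.le_ceil _)
  have : n ≤ ⌈(triangleRemovalBound δ)⁻¹⌉₊ := by exact_mod_cast this.trans (le_refl _)
  omega
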